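/- Let φ be a nilpotent endomorphism of a finite-dimensional vector space V over a field K. Then V admits a basis of the form {φ^i(x_γ) : γ ∈ Γ, 0 ≤ i ≤ k_γ - 1} for finitely many vectors x_γ and positive integers k_γ with φ^{k_γ}(x_γ) = 0 for each γ (a nilpotent Jordan normal base). -/

import Mathlib

open Polynomial Module
open scoped DirectSum

universe u v

noncomputable def quotXPowBasis (K : Type*) [Field K] (k : ℕ) :
    Basis (Fin k) K (K[X] ⧸ (K[X] ∙ ((X : K[X]) ^ k))) :=
  Basis.mk (v := fun j : Fin k => Submodule.Quotient.mk ((X : K[X]) ^ (j : ℕ)))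
    (by
      rw [Fintype.linearIndependent_iff]
      intro g hg i
      have hq : Submodule.Quotient.mk (p := (K[X] ∙ ((X : K[X]) ^ k)))
          (∑ j : Fin k, g j • (X : K[X]) ^ (j : ℕ)) = 0 := by
        rw [← hg]
        simp only [← Submodule.mkQ_apply, map_sum, LinearMap.map_smul_of_tower]
      rw [Submodule.Quotient.mk_eq_zero, Submodule.mem_span_singleton] at hq
      obtain ⟨c, hc⟩ := hq
      have h2 := congrArg (fun p => Polynomial.coeff p (i : ℕ)) hc
      simp only [smul_eq_mul, Polynomial.finset_sum_coeff, Polynomial.coeff_mul_X_pow',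
        Nat.not_le.mpr i.isLt, if_neg, not_false_iff] at h2
      have h3 : ∑ b : Fin k, (g b • (X : K[X]) ^ (b : ℕ)).coeff (i : ℕ) = g i := by
        rw [Finset.sum_eq_single i]
        · simp [Polynomial.coeff_smul, Polynomial.coeff_X_pow]
        · intro j _ hji
          have : (i : ℕ) ≠ (j : ℕ) := fun h => hji (Fin.ext h.symm)
          simp [Polynomial.coeff_smul, Polynomial.coeff_X_pow, this]
        · simp
      rw [h3] at h2
      exact h2.symm)
    (by
      rintro z -
      obtain ⟨p, rfl⟩ := Submodule.Quotient.mk_surjective _ z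
      have hmon : ((X : K[X]) ^ k).Monic := (Polynomial.monic_X.pow k)
      have key : ∀ q : K[X], q.natDegree < k ∨ q = 0 →
          Submodule.Quotient.mk (p := (K[X] ∙ ((X : K[X]) ^ k))) q ∈
            Submodule.span K (Set.range fun j : Fin k =>
              (Submodule.Quotient.mk ((X : K[X]) ^ (j : ℕ)) :
                K[X] ⧸ (K[X] ∙ ((X : K[X]) ^ k)))) := by
        intro q hq
        rcases hq with hq | rfl
        · have hrep : q = ∑ j ∈ Finset.range k, (q.coeff j) • (X : K[X]) ^ j := by
            conv_lhs => rw [Polynomial.as_sum_range' q k hq]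
            exact Finset.sum_congr rfl fun j _ => by rw [Polynomial.smul_X_eq_monomial]
          rw [hrep]
          simp only [← Submodule.mkQ_apply, map_sum, LinearMap.map_smul_of_tower]
          refine Submodule.sum_mem _ fun j hj => Submodule.smul_mem _ _ ?_
          rw [Finset.mem_range] at hj
          exact Submodule.subset_span ⟨⟨j, hj⟩, rfl⟩
        · simp
      have hp : Submodule.Quotient.mk (p := (K[X] ∙ ((X : K[X]) ^ k))) p
          = Submodule.Quotient.mk (p %ₘ ((X : K[X]) ^ k)) := by
        rw [Submodule.Quotient.eq]
        exact (Submodule.mem_span_singleton).mpr ⟨p /ₘ ((X : K[X]) ^ k), by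
          have := Polynomial.modByMonic_add_div p ((X : K[X]) ^ k)
          rw [smul_eq_mul]
          linear_combination this⟩
      rw [hp]
      refine key _ ?_
      by_cases h0 : p %ₘ ((X : K[X]) ^ k) = 0
      · exact Or.inr h0
      · left
        have := Polynomial.natDegree_modByMonic_lt p hmon (by
          intro h
          exact h0 (by rw [h]; simp [Polynomial.modByMonic_one]))
        simpa using this)

lemma quotXPowBasis_apply (K : Type*) [Field K] (k : ℕ) (j : Fin k) :
    quotXPowBasis K k j = Submodule.Quotient.mk ((X : K[X]) ^ (j : ℕ)) := by
  simp [quotXPowBasis]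

lemma dfinsupp_basis_apply {ι : Type*} [DecidableEq ι] {R : Type*} [Semiring R]
    {M : ι → Type*} [∀ i, AddCommMonoid (M i)] [∀ i, Module R (M i)]
    {η : ι → Type*} (b : ∀ i, Basis (η i) R (M i)) (p : Σ i, η i) :
    DFinsupp.basis b p = DFinsupp.single p.1 (b p.1 p.2) := by
  rw [Basis.apply_eq_iff]
  change ((DFinsupp.mapRange.linearEquiv fun i => (b i).repr).trans
    (sigmaFinsuppLequivDFinsupp R).symm) (DFinsupp.single p.1 (b p.1 p.2)) = _
  rw [LinearEquiv.trans_apply]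
  rw [DFinsupp.mapRange.linearEquiv_apply]
  rw [DFinsupp.mapRange_single]
  simp only [Basis.repr_self]
  rw [LinearEquiv.symm_apply_eq]
  exact (sigmaFinsuppEquivDFinsupp_single p 1).symm

theorem aux {K : Type u} {V : Type v} [Field K] [AddCommGroup V] [Module K V]
    [FiniteDimensional K V] (φ : Module.End K V) (hnil : IsNilpotent φ) :
    ∃ (m : ℕ) (x : Fin m → V) (k : Fin m → ℕ),
      (∀ γ, 1 ≤ k γ) ∧ (∀ γ, (φ ^ (k γ)) (x γ) = 0) ∧
      ∃ b : Basis ((γ : Fin m) × Fin (k γ)) K V,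
        ∀ p : (γ : Fin m) × Fin (k γ), b p = (φ ^ ((p.2 : ℕ))) (x p.1) := by
  classical
  obtain ⟨n, hn⟩ := hnil
  let N := ULift.{u} (Module.AEval' φ)
  haveI : Module.Finite K[X] N := Module.Finite.equiv (ULift.moduleEquiv.symm :
    Module.AEval' φ ≃ₗ[K[X]] N)
  have hN : Module.IsTorsion' N (Submonoid.powers (X : K[X])) := by
    intro x
    refine ⟨⟨X ^ n, pow_mem (Submonoid.mem_powers _) n⟩, ?_⟩
    have hdown : ((X : K[X]) ^ n • x).down = (X : K[X]) ^ n • x.down := rfl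
    have h2 : (Module.AEval'.of φ).symm ((X : K[X]) ^ n • x.down)
        = aeval φ ((X:K[X])^n) • (Module.AEval'.of φ).symm x.down :=
      Module.AEval.of_symm_smul _ _ _
    rw [map_pow, aeval_X, hn] at h2
    have h3 : (X : K[X]) ^ n • x.down = 0 := by
      apply (Module.AEval'.of φ).symm.injective
      simpa using h2
    show (X : K[X]) ^ n • x = 0
    ext1
    rw [hdown, h3]
    rfl
  obtain ⟨d, k, ⟨e⟩⟩ := Module.torsion_by_prime_power_decomposition
    (Polynomial.irreducible_X (R := K)) hN
  -- the K-linear equivalence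
  let E : V ≃ₗ[K] ⨁ i : Fin d, K[X] ⧸ (K[X] ∙ ((X : K[X]) ^ k i)) :=
    (Module.AEval'.of φ).trans
      (((ULift.moduleEquiv (R := K) (M := Module.AEval' φ)).symm).trans
        (e.restrictScalars K))
  -- key smul computation
  have hE : ∀ (j : ℕ) (w : ⨁ i : Fin d, K[X] ⧸ (K[X] ∙ ((X : K[X]) ^ k i))),
      E.symm ((X : K[X]) ^ j • w) = (φ ^ j) (E.symm w) := by
    intro j w
    show (Module.AEval'.of φ).symm
        ((ULift.moduleEquiv (R := K) (M := Module.AEval' φ))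
          ((e.restrictScalars K).symm ((X : K[X]) ^ j • w)))
      = (φ ^ j) ((Module.AEval'.of φ).symm
        ((ULift.moduleEquiv (R := K) (M := Module.AEval' φ))
          ((e.restrictScalars K).symm w)))
    have h1 : (e.restrictScalars K).symm ((X : K[X]) ^ j • w)
        = (X : K[X]) ^ j • (e.restrictScalars K).symm w := by
      show e.symm ((X : K[X]) ^ j • w) = (X : K[X]) ^ j • e.symm w
      exact map_smul e.symm _ _
    rw [h1]
    have h2 : (ULift.moduleEquiv (R := K) (M := Module.AEval' φ))
        ((X : K[X]) ^ j • (e.restrictScalars K).symm w)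
        = (X : K[X]) ^ j • (ULift.moduleEquiv (R := K) (M := Module.AEval' φ))
            ((e.restrictScalars K).symm w) := rfl
    rw [h2]
    rw [Module.AEval.of_symm_smul]
    rw [map_pow, aeval_X]
    rfl
  -- the generators
  set x : Fin d → V := fun i =>
    E.symm (DFinsupp.single i (Submodule.Quotient.mk 1)) with hxdef
  have key : ∀ (i : Fin d) (j : ℕ),
      E.symm (DFinsupp.single i
        ((Submodule.Quotient.mk ((X : K[X]) ^ j)) :
          K[X] ⧸ (K[X] ∙ ((X : K[X]) ^ k i)))) = (φ ^ j) (x i) := by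
    intro i j
    have h1 : ((Submodule.Quotient.mk ((X : K[X]) ^ j)) :
        K[X] ⧸ (K[X] ∙ ((X : K[X]) ^ k i)))
        = (X : K[X]) ^ j • Submodule.Quotient.mk 1 := by
      rw [← Submodule.Quotient.mk_smul, smul_eq_mul, mul_one]
    rw [h1]
    have h2 : (DFinsupp.single i ((X : K[X]) ^ j •
          (Submodule.Quotient.mk 1 : K[X] ⧸ (K[X] ∙ ((X : K[X]) ^ k i)))) :
            ⨁ i : Fin d, K[X] ⧸ (K[X] ∙ ((X : K[X]) ^ k i)))
        = (X : K[X]) ^ j • DFinsupp.single i (Submodule.Quotient.mk 1) :=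
      DFinsupp.single_smul _ _
    rw [h2, hE]
  have hx0 : ∀ i : Fin d, (φ ^ (k i)) (x i) = 0 := by
    intro i
    rw [← key i (k i)]
    have : ((Submodule.Quotient.mk ((X : K[X]) ^ k i)) :
        K[X] ⧸ (K[X] ∙ ((X : K[X]) ^ k i))) = 0 := by
      rw [Submodule.Quotient.mk_eq_zero]
      exact Submodule.mem_span_singleton_self _
    rw [this, DFinsupp.single_zero, map_zero]
  -- big basis over sigma type
  let B1 : Basis (Σ i : Fin d, Fin (k i)) K V :=
    (DFinsupp.basis (fun i => quotXPowBasis K (k i))).map E.symm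
  have hB1 : ∀ p : Σ i : Fin d, Fin (k i), B1 p = (φ ^ ((p.2 : ℕ))) (x p.1) := by
    intro p
    show E.symm (DFinsupp.basis (fun i => quotXPowBasis K (k i)) p) = _
    rw [dfinsupp_basis_apply, quotXPowBasis_apply, key]
  -- reindex to positive sizes
  let ι' := {i : Fin d // k i ≠ 0}
  let m := Fintype.card ι'
  let e0 : Fin m ≃ ι' := (Fintype.equivFin ι').symm
  let σ : (Σ γ : Fin m, Fin (k (e0 γ))) ≃ Σ i : Fin d, Fin (k i) :=
    (Equiv.sigmaCongrLeft (β := fun i : ι' => Fin (k i.1)) e0).trans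
      (Equiv.sigmaSubtypeEquivOfSubset (fun i => Fin (k i)) (fun i => k i ≠ 0)
        (fun i j => j.pos.ne'))
  refine ⟨m, fun γ => x (e0 γ), fun γ => k (e0 γ), fun γ => Nat.one_le_iff_ne_zero.mpr (e0 γ).2,
    fun γ => hx0 _, B1.reindex σ.symm, ?_⟩
  intro p
  rw [Basis.reindex_apply, Equiv.symm_symm]
  have hσ : σ p = ⟨(e0 p.1 : Fin d), p.2⟩ := rfl
  rw [hσ, hB1]


theorem stmt1 {K V : Type*} [Field K] [AddCommGroup V] [Module K V]
    [FiniteDimensional K V] (φ : Module.End K V) (hnil : IsNilpotent φ) :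
    ∃ (m : ℕ) (x : Fin m → V) (k : Fin m → ℕ),
      (∀ γ, 1 ≤ k γ) ∧ (∀ γ, (φ ^ (k γ)) (x γ) = 0) ∧
      ∃ b : Basis ((γ : Fin m) × Fin (k γ)) K V,
        ∀ p : (γ : Fin m) × Fin (k γ), b p = (φ ^ ((p.2 : ℕ))) (x p.1) := by
  exact aux φ hnil
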